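/- Contraction comparison: for a finite MDP with two nonempty-valued selection operators α₁ ⊆ α₂ (pointwise), the fixed points Q₁, Q₂ of the corresponding reduced Bellman optimality operators satisfy Q₁(s,a) ≤ Q₂(s,a) for all (s,a), provided rewards are shared. Consequently max_{a ∈ α₁(s)} Q₁(s,a) ≤ max_{a ∈ α₂(s)} Q₂(s,a) for every s. -/
import Mathlib


open scoped BigOperators

/-- The reduced Bellman optimality operator
`(T'Q)(s,a) = R s + γ * ∑ s', P s a s' * max_{a' ∈ α s'} Q s' a'`. -/
noncomputable def redBellman {S A : Type*} [Fintype S]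
    (P : S → A → S → ℝ) (R : S → ℝ) (γ : ℝ) (α : S → Set A)
    (Q : S → A → ℝ) : S → A → ℝ :=
  fun s a => R s + γ * ∑ s', P s a s' * sSup ((Q s') '' α s')

/-- fixed points of reduced Bellman operators are monotone in
the selection operator. -/
theorem stmt_10 {S A : Type*} [Fintype S] [Fintype A] [Nonempty S] [Nonempty A]
    (P : S → A → S → ℝ) (hP₀ : ∀ s a s', 0 ≤ P s a s')
    (hP₁ : ∀ s a, ∑ s', P s a s' = 1)
    (R : S → ℝ) (γ : ℝ) (hγ₀ : 0 ≤ γ) (hγ₁ : γ < 1)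
    (α₁ α₂ : S → Set A) (hα₁ : ∀ s, (α₁ s).Nonempty) (hα₂ : ∀ s, (α₂ s).Nonempty)
    (hsub : ∀ s, α₁ s ⊆ α₂ s)
    (Q₁ : S → A → ℝ) (hQ₁ : redBellman P R γ α₁ Q₁ = Q₁)
    (Q₂ : S → A → ℝ) (hQ₂ : redBellman P R γ α₂ Q₂ = Q₂) :
    (∀ s a, Q₁ s a ≤ Q₂ s a) ∧
    (∀ s, sSup ((Q₁ s) '' α₁ s) ≤ sSup ((Q₂ s) '' α₂ s)) := by
  set M : ℝ := Finset.sup' Finset.univ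
      (Finset.univ_nonempty (α := S × A)) (fun p => Q₁ p.1 p.2 - Q₂ p.1 p.2) with hMdef
  have hM : ∀ s a, Q₁ s a - Q₂ s a ≤ M := fun s a =>
    Finset.le_sup' (f := fun p : S × A => Q₁ p.1 p.2 - Q₂ p.1 p.2) (Finset.mem_univ (s, a))
  have hbdd : ∀ (Q : S → A → ℝ) (s : S) (α : Set A), BddAbove (Q s '' α) :=
    fun Q s α => (Set.toFinite _).bddAbove
  have hsup : ∀ s', sSup (Q₁ s' '' α₁ s') ≤ sSup (Q₂ s' '' α₂ s') + M := by
    intro s'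
    apply csSup_le ((hα₁ s').image _)
    rintro x ⟨a', ha', rfl⟩
    have h1 : Q₂ s' a' ≤ sSup (Q₂ s' '' α₂ s') :=
      le_csSup (hbdd Q₂ s' (α₂ s')) ⟨a', hsub s' ha', rfl⟩
    have := hM s' a'
    linarith
  -- show M ≤ γ * M
  obtain ⟨p, -, hp⟩ := Finset.exists_mem_eq_sup' (Finset.univ_nonempty (α := S × A))
      (fun p : S × A => Q₁ p.1 p.2 - Q₂ p.1 p.2)
  have hMle : M ≤ γ * M := by
    have e1 : Q₁ p.1 p.2 = R p.1 + γ * ∑ s', P p.1 p.2 s' * sSup (Q₁ s' '' α₁ s') :=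
      (congrFun (congrFun hQ₁ p.1) p.2).symm
    have e2 : Q₂ p.1 p.2 = R p.1 + γ * ∑ s', P p.1 p.2 s' * sSup (Q₂ s' '' α₂ s') :=
      (congrFun (congrFun hQ₂ p.1) p.2).symm
    have hsum : ∑ s', P p.1 p.2 s' * sSup (Q₁ s' '' α₁ s')
        ≤ ∑ s', P p.1 p.2 s' * (sSup (Q₂ s' '' α₂ s') + M) := by
      apply Finset.sum_le_sum
      intro s' _
      exact mul_le_mul_of_nonneg_left (hsup s') (hP₀ p.1 p.2 s')
    have hdistrib : ∑ s', P p.1 p.2 s' * (sSup (Q₂ s' '' α₂ s') + M)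
        = (∑ s', P p.1 p.2 s' * sSup (Q₂ s' '' α₂ s')) + M := by
      simp [mul_add, Finset.sum_add_distrib, ← Finset.sum_mul, hP₁ p.1 p.2]
    have : Q₁ p.1 p.2 - Q₂ p.1 p.2 ≤ γ * M := by
      rw [e1, e2]
      nlinarith [hsum, hdistrib]
    rw [hMdef, ← hp] at *
    exact this
  have hM0 : M ≤ 0 := by nlinarith
  have hQle : ∀ s a, Q₁ s a ≤ Q₂ s a := fun s a => by have := hM s a; linarith
  refine ⟨hQle, fun s => ?_⟩
  apply csSup_le ((hα₁ s).image _)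
  rintro x ⟨a', ha', rfl⟩
  exact (hQle s a').trans (le_csSup (hbdd Q₂ s (α₂ s)) ⟨a', hsub s ha', rfl⟩)
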